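/- The function F(x,λ,α,β,γ) = -x^3 + βx - (λ+x)^2 - γ(λ+x)x - α has a winged cusp singularity at x = 1/3, λ = 0 with parameter values α = -1/27, β = -1/3, γ = -2; that is, at this point F = F_x = F_λ = F_xx = F_xλ = F_λλ = 0, while F_xxx ≠ 0 and the 2×2 Hessian degeneracy conditions of the winged cusp hold. -/

import Mathlib

lemma cubic_hasDerivAt (a b c d x : ℝ) :
    HasDerivAt (fun x : ℝ => a*x^3+b*x^2+c*x+d) (3*a*x^2+2*b*x+c) x := by
  have h := (((hasDerivAt_pow 3 x).const_mul a).add ((hasDerivAt_pow 2 x).const_mul b)).add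
    (((hasDerivAt_id x).const_mul c).add (hasDerivAt_const x d))
  convert h using 1
  · rfl
  · rfl
  · funext y; simp only [id_eq, Pi.add_apply]; ring
  · norm_num; ring

lemma cubic_deriv (a b c d : ℝ) :
    deriv (fun x : ℝ => a*x^3+b*x^2+c*x+d) = fun x => 3*a*x^2+2*b*x+c := by
  funext x
  exact (cubic_hasDerivAt a b c d x).deriv

/-- The fixed-point map `F(x,λ,α,β,γ) = -x³ + βx - (λ+x)² - γ(λ+x)x - α` has a winged
cusp singularity at `x = 1/3`, `λ = 0`, `α = -1/27`, `β = -1/3`, `γ = -2`: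
`F = F_x = F_λ = F_xx = F_xλ = 0` there, while `F_xxx ≠ 0` and `F_λλ ≠ 0`
(the winged-cusp nondegeneracy conditions). -/
theorem fixed_point_map_winged_cusp (F : ℝ → ℝ → ℝ → ℝ → ℝ → ℝ)
    (hF : F = fun x lam α β γ =>
      -x ^ 3 + β * x - (lam + x) ^ 2 - γ * (lam + x) * x - α) :
    F (1/3) 0 (-1/27) (-1/3) (-2) = 0 ∧
    deriv (fun x => F x 0 (-1/27) (-1/3) (-2)) (1/3) = 0 ∧
    deriv (fun lam => F (1/3) lam (-1/27) (-1/3) (-2)) 0 = 0 ∧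
    deriv (deriv (fun x => F x 0 (-1/27) (-1/3) (-2))) (1/3) = 0 ∧
    deriv (fun lam => deriv (fun x => F x lam (-1/27) (-1/3) (-2)) (1/3)) 0 = 0 ∧
    deriv (deriv (deriv (fun x => F x 0 (-1/27) (-1/3) (-2)))) (1/3) ≠ 0 ∧
    deriv (deriv (fun lam => F (1/3) lam (-1/27) (-1/3) (-2))) 0 ≠ 0 := by
  subst hF
  -- F(x,0) as a cubic in x
  have hx : (fun x : ℝ => -x ^ 3 + (-1/3) * x - ((0:ℝ) + x) ^ 2 - (-2) * ((0:ℝ) + x) * x - (-1/27))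
      = fun x : ℝ => (-1)*x^3+1*x^2+(-1/3)*x+(1/27) := by funext x; ring
  -- F(1/3, lam) as a cubic in lam
  have hl : (fun lam : ℝ => -(1/3:ℝ) ^ 3 + (-1/3) * (1/3) - (lam + 1/3) ^ 2 - (-2) * (lam + 1/3) * (1/3) - (-1/27))
      = fun lam : ℝ => 0*lam^3+(-1)*lam^2+0*lam+0 := by funext lam; ring
  -- second derivative helpers
  have hx1 : (fun x : ℝ => 3*(-1)*x^2+2*1*x+(-1/3))
      = fun x : ℝ => 0*x^3+(-3)*x^2+2*x+(-1/3) := by funext x; ring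
  have hx2 : (fun x : ℝ => 3*(0:ℝ)*x^2+2*(-3)*x+2)
      = fun x : ℝ => 0*x^3+0*x^2+(-6)*x+2 := by funext x; ring
  have hl1 : (fun lam : ℝ => 3*(0:ℝ)*lam^2+2*(-1)*lam+0)
      = fun lam : ℝ => 0*lam^3+0*lam^2+(-2)*lam+0 := by funext lam; ring
  refine ⟨by norm_num, ?_, ?_, ?_, ?_, ?_, ?_⟩
  · simp only [hx, cubic_deriv]; norm_num
  · simp only [hl, cubic_deriv]; norm_num
  · simp only [hx, cubic_deriv, hx1]; norm_num
  · -- mixed: for each lam, F(·,lam) is a cubic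
    have : (fun lam : ℝ => deriv (fun x : ℝ =>
        -x ^ 3 + (-1/3) * x - (lam + x) ^ 2 - (-2) * (lam + x) * x - (-1/27)) (1/3))
        = fun _ : ℝ => (0:ℝ) := by
      funext lam
      have h : (fun x : ℝ => -x ^ 3 + (-1/3) * x - (lam + x) ^ 2 - (-2) * (lam + x) * x - (-1/27))
          = fun x : ℝ => (-1)*x^3+1*x^2+(-1/3)*x+(1/27 - lam^2) := by funext x; ring
      rw [h, cubic_deriv]; norm_num
    simp only [this, deriv_const]
  · simp only [hx, cubic_deriv, hx1, hx2]; norm_num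
  · simp only [hl, cubic_deriv, hl1]; norm_num
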